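/- If φ : A → B and ψ : B → C are polynomial maps of commutative additive monoids of degrees m and n respectively, then ψ ∘ φ is a polynomial map of degree at most mn. -/

import Mathlib

/-- The finite difference `(D_a φ)(x) = φ(x + a) − φ(x)`. -/
def finDiff {A M : Type} [AddCommMonoid A] [AddCommGroup M] (a : A) (φ : A → M) : A → M :=
  fun x => φ (x + a) - φ x

/-- The iterated finite difference `D_{(a₁,…,aₙ)}φ`. -/
def iterDiff {A M : Type} [AddCommMonoid A] [AddCommGroup M] (l : List A) (φ : A → M) : A → M :=
  l.foldr finDiff φ

/-- A group-valued map is polynomial of degree ≤ `d` if all its `(d+1)`-fold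
iterated finite differences vanish. -/
def PolyDegLE {A M : Type} [AddCommMonoid A] [AddCommGroup M] (φ : A → M) (d : ℕ) : Prop :=
  ∀ l : List A, l.length = d + 1 → ∀ x, iterDiff l φ x = 0

namespace PolyAux

variable {A M : Type} [AddCommMonoid A] [AddCommGroup M]

theorem finDiff_comm (a b : A) (φ : A → M) : finDiff a (finDiff b φ) = finDiff b (finDiff a φ) := by
  funext x
  simp only [finDiff, add_right_comm]
  abel

instance : LeftCommutative (finDiff (A := A) (M := M)) := ⟨fun a b φ => finDiff_comm a b φ⟩

@[simp] theorem iterDiff_nil (φ : A → M) : iterDiff ([] : List A) φ = φ := rfl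

@[simp] theorem iterDiff_cons (a : A) (l : List A) (φ : A → M) :
    iterDiff (a :: l) φ = finDiff a (iterDiff l φ) := rfl

theorem iterDiff_append (l₁ l₂ : List A) (φ : A → M) :
    iterDiff (l₁ ++ l₂) φ = iterDiff l₁ (iterDiff l₂ φ) := by
  simp [iterDiff, List.foldr_append]

theorem iterDiff_perm {l₁ l₂ : List A} (h : l₁.Perm l₂) (φ : A → M) :
    iterDiff l₁ φ = iterDiff l₂ φ :=
  h.foldr_eq φ

@[simp] theorem iterDiff_zero_fn (l : List A) : iterDiff l (fun _ => (0 : M)) = fun _ => 0 := by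
  induction l with
  | nil => rfl
  | cons a l ih => rw [iterDiff_cons, ih]; funext x; simp [finDiff]

theorem finDiff_sub (a : A) (φ ψ : A → M) :
    finDiff a (fun x => φ x - ψ x) = fun x => finDiff a φ x - finDiff a ψ x := by
  funext x; simp [finDiff]; abel

theorem iterDiff_sub (l : List A) (φ ψ : A → M) :
    iterDiff l (fun x => φ x - ψ x) = fun x => iterDiff l φ x - iterDiff l ψ x := by
  induction l with
  | nil => rfl
  | cons a l ih => simp only [iterDiff_cons, ih, finDiff_sub]

theorem finDiff_zsmul (a : A) (c : ℤ) (φ : A → M) :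
    finDiff a (fun x => c • φ x) = fun x => c • finDiff a φ x := by
  funext x; simp [finDiff, smul_sub]

theorem iterDiff_zsmul (l : List A) (c : ℤ) (φ : A → M) :
    iterDiff l (fun x => c • φ x) = fun x => c • iterDiff l φ x := by
  induction l with
  | nil => rfl
  | cons a l ih => simp only [iterDiff_cons, ih, finDiff_zsmul]

theorem finDiff_finsetSum {ι : Type} (s : Finset ι) (a : A) (φ : ι → A → M) :
    finDiff a (fun x => ∑ i ∈ s, φ i x) = fun x => ∑ i ∈ s, finDiff a (φ i) x := by
  funext x; simp [finDiff, Finset.sum_sub_distrib]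

theorem iterDiff_finsetSum {ι : Type} (s : Finset ι) (l : List A) (φ : ι → A → M) :
    iterDiff l (fun x => ∑ i ∈ s, φ i x) = fun x => ∑ i ∈ s, iterDiff l (φ i) x := by
  induction l with
  | nil => rfl
  | cons a l ih => simp only [iterDiff_cons, ih, finDiff_finsetSum]

theorem finDiff_shift (a d : A) (φ : A → M) :
    finDiff a (fun x => φ (x + d)) = fun x => finDiff a φ (x + d) := by
  funext x; simp [finDiff, add_right_comm]

theorem iterDiff_shift (l : List A) (d : A) (φ : A → M) :
    iterDiff l (fun x => φ (x + d)) = fun x => iterDiff l φ (x + d) := by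
  induction l with
  | nil => rfl
  | cons a l ih => simp only [iterDiff_cons, ih, finDiff_shift]

theorem polyDegLE_len_ge {φ : A → M} {d : ℕ} (h : PolyDegLE φ d) {l : List A}
    (hl : d + 1 ≤ l.length) (x : A) : iterDiff l φ x = 0 := by
  have hsplit : l = l.take (l.length - (d+1)) ++ l.drop (l.length - (d+1)) :=
    (List.take_append_drop _ l).symm
  have hlen : (l.drop (l.length - (d+1))).length = d + 1 := by
    rw [List.length_drop]; omega
  have hz : iterDiff (l.drop (l.length - (d+1))) φ = fun _ => 0 := by
    funext y; exact h _ hlen y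
  rw [hsplit, iterDiff_append, hz, iterDiff_zero_fn]

/-- The finite-difference expansion over a finset of increments. -/
def FD {ι : Type} [DecidableEq ι] (T : Finset ι) (a : ι → A) (φ : A → M) (x : A) : M :=
  ∑ S ∈ T.powerset, (-1 : ℤ) ^ (T.card - S.card) • φ (x + ∑ i ∈ S, a i)

@[simp] theorem FD_empty {ι : Type} [DecidableEq ι] (a : ι → A) (φ : A → M) (x : A) :
    FD (∅ : Finset ι) a φ x = φ x := by
  simp [FD]

theorem FD_insert {ι : Type} [DecidableEq ι] {T : Finset ι} {j : ι} (hj : j ∉ T)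
    (a : ι → A) (φ : A → M) (x : A) :
    FD (insert j T) a φ x = FD T a φ (x + a j) - FD T a φ x := by
  classical
  rw [FD, Finset.powerset_insert, Finset.sum_union]
  · have h1 : ∑ S ∈ T.powerset, (-1 : ℤ) ^ ((insert j T).card - S.card) • φ (x + ∑ i ∈ S, a i)
        = - FD T a φ x := by
      rw [FD, ← Finset.sum_neg_distrib]
      apply Finset.sum_congr rfl
      intro S hS
      have hST : S ⊆ T := Finset.mem_powerset.mp hS
      have hc : S.card ≤ T.card := Finset.card_le_card hST
      rw [Finset.card_insert_of_notMem hj]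
      have : T.card + 1 - S.card = (T.card - S.card) + 1 := by omega
      rw [this, pow_succ]
      simp [neg_smul]
    have h2 : ∑ S ∈ T.powerset.image (insert j),
          (-1 : ℤ) ^ ((insert j T).card - S.card) • φ (x + ∑ i ∈ S, a i)
        = FD T a φ (x + a j) := by
      rw [Finset.sum_image]
      · rw [FD]
        apply Finset.sum_congr rfl
        intro S hS
        have hST : S ⊆ T := Finset.mem_powerset.mp hS
        have hjS : j ∉ S := fun h => hj (hST h)
        rw [Finset.card_insert_of_notMem hjS, Finset.card_insert_of_notMem hj,
          Finset.sum_insert hjS]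
        have hc : S.card ≤ T.card := Finset.card_le_card hST
        have : T.card + 1 - (S.card + 1) = T.card - S.card := by omega
        rw [this, ← add_assoc]
      · intro S hS S' hS' h
        have hST : S ⊆ T := Finset.mem_powerset.mp hS
        have hST' : S' ⊆ T := Finset.mem_powerset.mp hS'
        have : ∀ x ∈ S, x ∈ S' := by
          intro y hy
          have : y ∈ insert j S' := h ▸ Finset.mem_insert_of_mem hy
          rcases Finset.mem_insert.mp this with rfl | h'
          · exact absurd hy (fun hy => hj (hST hy))
          · exact h'
        have h' : ∀ x ∈ S', x ∈ S := by
          intro y hy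
          have : y ∈ insert j S := h ▸ Finset.mem_insert_of_mem hy
          rcases Finset.mem_insert.mp this with rfl | h'
          · exact absurd hy (fun hy => hj (hST' hy))
          · exact h'
        exact Finset.Subset.antisymm this h'
    rw [h1, h2]; abel
  · rw [Finset.disjoint_right]
    intro S hS hS'
    have := Finset.mem_powerset.mp hS'
    obtain ⟨S', hS'', rfl⟩ := Finset.mem_image.mp hS
    exact hj (this (Finset.mem_insert_self j S'))

theorem FD_eq_iterDiff {ι : Type} [DecidableEq ι] (T : Finset ι) (a : ι → A) (φ : A → M)
    (x : A) : FD T a φ x = iterDiff (T.toList.map a) φ x := by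
  classical
  induction T using Finset.induction_on generalizing x with
  | empty => simp
  | insert _ _ hj =>
    rename_i j T ih
    rw [FD_insert hj]
    have hperm : ((insert j T).toList.map a).Perm (a j :: T.toList.map a) := by
      exact (Finset.toList_insert hj).map a
    rw [iterDiff_perm hperm, iterDiff_cons]
    simp only [finDiff]
    rw [ih, ih]

theorem FD_vanish {ι : Type} [DecidableEq ι] {φ : A → M} {d : ℕ} (h : PolyDegLE φ d)
    {T : Finset ι} (hT : d + 1 ≤ T.card) (a : ι → A) (x : A) : FD T a φ x = 0 := by
  rw [FD_eq_iterDiff]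
  apply polyDegLE_len_ge h
  simp [hT]

theorem iterDiff_eq_FD (l : List A) (φ : A → M) (x : A) :
    iterDiff l φ x = FD (Finset.univ : Finset (Fin l.length)) l.get φ x := by
  rw [FD_eq_iterDiff]
  apply congrFun
  apply iterDiff_perm
  have h1 : ((Finset.univ : Finset (Fin l.length)).toList.map l.get).Perm
      ((List.finRange l.length).map l.get) := by
    apply List.Perm.map
    apply List.perm_of_nodup_nodup_toFinset_eq
    · exact Finset.nodup_toList _
    · exact List.nodup_finRange _
    · ext i; simp
  have h2 : (List.finRange l.length).map l.get = l := List.map_get_finRange l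
  exact (h2 ▸ h1).symm

end PolyAux

namespace PolyAux

section Extension

variable {B M N : Type} [AddCommMonoid B] [AddCommGroup M] [AddCommGroup N]

/-- the truncated "inverse shift" value used to extend a polynomial map to the
group completion. `Gr f n w c` stands morally for `f (w - c)`. -/
def Gr (f : B → N) (n : ℕ) (w c : B) : N :=
  ∑ i ∈ Finset.range (n + 1), (-1 : ℤ) ^ i • iterDiff (List.replicate i c) f w

/-- general telescoping identity. -/
theorem inv_general (f : B → N) (n : ℕ) (c x : B) :
    ∑ i ∈ Finset.range (n + 1), (-1 : ℤ) ^ i • iterDiff (List.replicate i c) f (x + c)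
      = f x + (-1 : ℤ) ^ n • iterDiff (List.replicate (n + 1) c) f x := by
  induction n with
  | zero =>
    simp [iterDiff, finDiff]
  | succ n ih =>
    rw [Finset.sum_range_succ, ih]
    have : iterDiff (List.replicate (n + 1 + 1) c) f x
        = iterDiff (List.replicate (n + 1) c) f (x + c) - iterDiff (List.replicate (n + 1) c) f x := by
      rw [List.replicate_succ, iterDiff_cons]; rfl
    rw [this]
    have hs : ((-1 : ℤ) ^ (n + 1)) = -((-1 : ℤ) ^ n) := by ring
    rw [hs, smul_sub, neg_smul, neg_smul]
    abel

theorem Gr_base {f : B → N} {n : ℕ} (hf : PolyDegLE f n) (x c : B) :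
    Gr f n (x + c) c = f x := by
  rw [Gr, inv_general, hf _ (by simp) x, smul_zero, add_zero]

theorem iterDiff_replicate_vanish {f : B → N} {n : ℕ} (hf : PolyDegLE f n) (c : B) (i : ℕ)
    (l : List B) (hl : l.length = n + 1) :
    iterDiff l (iterDiff (List.replicate i c) f) = fun _ => 0 := by
  have := iterDiff_append l (List.replicate i c) f
  rw [← iterDiff_append, iterDiff_perm (List.perm_append_comm), iterDiff_append]
  have h0 : iterDiff l f = fun _ => 0 := funext fun y => hf l hl y
  rw [h0, iterDiff_zero_fn]

theorem Gr_shift {f : B → N} {n : ℕ} (hf : PolyDegLE f n) (w c d : B) :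
    Gr f n (w + d) (c + d) = Gr f n w c := by
  set q : B → N := fun x => Gr f n (x + d) (c + d) - Gr f n x c with hq
  -- step 1 : q (x + c) = 0
  have step1 : ∀ x, q (x + c) = 0 := by
    intro x
    have h1 : Gr f n (x + c + d) (c + d) = f x := by
      have : x + c + d = x + (c + d) := by rw [add_assoc]
      rw [this, Gr_base hf]
    have h2 : Gr f n (x + c) c = f x := Gr_base hf x c
    simp [hq, h1, h2]
  -- step 2 : (n+1)-fold c-difference of q vanishes
  have step2 : iterDiff (List.replicate (n + 1) c) q = fun _ => 0 := by
    have hq1 : q = fun x => (∑ i ∈ Finset.range (n + 1),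
        (-1 : ℤ) ^ i • iterDiff (List.replicate i (c + d)) f (x + d)) - Gr f n x c := by
      funext x; simp only [hq, Gr]
    rw [hq1, iterDiff_sub]
    funext x
    have hA : iterDiff (List.replicate (n + 1) c) (fun x => ∑ i ∈ Finset.range (n + 1),
        (-1 : ℤ) ^ i • iterDiff (List.replicate i (c + d)) f (x + d)) = fun _ => 0 := by
      rw [iterDiff_finsetSum]
      funext y
      apply Finset.sum_eq_zero
      intro i _
      have h1 : (fun x => (-1:ℤ)^i • iterDiff (List.replicate i (c+d)) f (x + d))
          = fun x => (-1:ℤ)^i • ((fun z => iterDiff (List.replicate i (c+d)) f (z + d)) x) := rfl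
      rw [h1, iterDiff_zsmul]
      have h2 : (fun z => iterDiff (List.replicate i (c+d)) f (z + d)) =
          fun z => (iterDiff (List.replicate i (c+d)) f) (z + d) := rfl
      rw [h2, iterDiff_shift, iterDiff_replicate_vanish hf (c+d) i _ (by simp)]
      simp
    have hB : iterDiff (List.replicate (n + 1) c) (fun x => Gr f n x c) = fun _ => 0 := by
      have : (fun x => Gr f n x c) = fun x => ∑ i ∈ Finset.range (n + 1),
          (-1 : ℤ) ^ i • iterDiff (List.replicate i c) f x := rfl
      rw [this, iterDiff_finsetSum]
      funext y
      apply Finset.sum_eq_zero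
      intro i _
      rw [iterDiff_zsmul, iterDiff_replicate_vanish hf c i _ (by simp)]
      simp
    rw [hA, hB]; simp
  -- step 3 : conclude q = 0
  have step3 : ∀ x, q x = 0 := by
    intro x
    have := inv_general q n c x
    have hL : ∀ i, iterDiff (List.replicate i c) q (x + c) = 0 := by
      intro i
      have hsh : iterDiff (List.replicate i c) q (x + c)
          = iterDiff (List.replicate i c) (fun y => q (y + c)) x := by
        rw [iterDiff_shift]
      rw [hsh]
      have : (fun y => q (y + c)) = fun _ => (0 : N) := funext fun y => step1 y
      rw [this, iterDiff_zero_fn]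
    rw [Finset.sum_congr rfl (fun i _ => by rw [hL i, smul_zero])] at this
    rw [Finset.sum_const_zero] at this
    have h2 : iterDiff (List.replicate (n + 1) c) q x = 0 := by rw [step2]
    rw [h2, smul_zero, add_zero] at this
    exact this.symm
  have := step3 w
  simp only [hq] at this
  exact sub_eq_zero.mp this
  
theorem Gr_repr {f : B → N} {n : ℕ} (hf : PolyDegLE f n) {κB : B → M}
    (hBadd : ∀ a b : B, κB (a + b) = κB a + κB b)
    (hBker : ∀ a b : B, κB a = κB b ↔ ∃ c : B, a + c = b + c)
    {a b a' b' : B} (h : κB a + κB b' = κB a' + κB b) :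
    Gr f n a b = Gr f n a' b' := by
  have h1 : κB (a + b') = κB (a' + b) := by rw [hBadd, hBadd, h]
  obtain ⟨c, hc⟩ := (hBker _ _).mp h1
  have e1 : Gr f n a b = Gr f n (a + (b' + c)) (b + (b' + c)) := (Gr_shift hf a b (b' + c)).symm
  have e2 : Gr f n a' b' = Gr f n (a' + (b + c)) (b' + (b + c)) := (Gr_shift hf a' b' (b + c)).symm
  rw [e1, e2]
  have h3 : a + (b' + c) = a' + (b + c) := by
    have : a + b' + c = a' + b + c := hc
    rw [← add_assoc, ← add_assoc]; exact this
  have h4 : b + (b' + c) = b' + (b + c) := by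
    rw [← add_assoc, ← add_assoc, add_comm b b']
  rw [h3, h4]

variable (κB : B → M)

/-- The extension of `f : B → N` to the group completion `M` of `B`. -/
noncomputable def barPsi (hBgen : ∀ z : M, ∃ a b : B, z = κB a - κB b) (f : B → N) (n : ℕ) :
    M → N :=
  fun z => Gr f n (Classical.choose (hBgen z))
    (Classical.choose (Classical.choose_spec (hBgen z)))

variable {κB}

theorem barPsi_eq {f : B → N} {n : ℕ} (hf : PolyDegLE f n)
    (hBadd : ∀ a b : B, κB (a + b) = κB a + κB b)
    (hBgen : ∀ z : M, ∃ a b : B, z = κB a - κB b)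
    (hBker : ∀ a b : B, κB a = κB b ↔ ∃ c : B, a + c = b + c)
    {z : M} {a b : B} (h : z = κB a - κB b) :
    barPsi κB hBgen f n z = Gr f n a b := by
  set a₀ := Classical.choose (hBgen z)
  set b₀ := Classical.choose (Classical.choose_spec (hBgen z))
  have hz : z = κB a₀ - κB b₀ := Classical.choose_spec (Classical.choose_spec (hBgen z))
  have key : κB a₀ + κB b = κB a + κB b₀ := by
    have h2 : κB a₀ - κB b₀ = κB a - κB b := hz.symm.trans h
    exact sub_eq_sub_iff_add_eq_add.mp h2
  exact Gr_repr hf hBadd hBker key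

theorem kappa_zero (hBadd : ∀ a b : B, κB (a + b) = κB a + κB b) : κB 0 = 0 := by
  have := hBadd 0 0
  rw [add_zero] at this
  exact add_eq_left.mp this.symm

theorem iterDiff_replicate_zero (f : B → N) (j : ℕ) :
    iterDiff (List.replicate (j + 1) (0 : B)) f = fun _ => 0 := by
  rw [List.replicate_succ, iterDiff_cons]
  funext x
  simp [finDiff]

theorem Gr_zero_right (f : B → N) (n : ℕ) (b : B) : Gr f n b 0 = f b := by
  rw [Gr, Finset.sum_eq_single 0]
  · simp [iterDiff]
  · intro i hi h0
    obtain ⟨j, rfl⟩ := Nat.exists_eq_succ_of_ne_zero h0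
    rw [iterDiff_replicate_zero]
    simp
  · simp

theorem barPsi_kappa {f : B → N} {n : ℕ} (hf : PolyDegLE f n)
    (hBadd : ∀ a b : B, κB (a + b) = κB a + κB b)
    (hBgen : ∀ z : M, ∃ a b : B, z = κB a - κB b)
    (hBker : ∀ a b : B, κB a = κB b ↔ ∃ c : B, a + c = b + c)
    (b : B) : barPsi κB hBgen f n (κB b) = f b := by
  have h : κB b = κB b - κB 0 := by rw [kappa_zero hBadd, sub_zero]
  rw [barPsi_eq hf hBadd hBgen hBker h, Gr_zero_right]

/-- mixed difference lemma: an alternating sum over `S ⊆ T` of `φ` evaluated at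
`x + ∑_{i ∈ S} a i + ∑_{i ∈ T \ S} b i` vanishes provided all `T.card`-fold
iterated differences of `φ` vanish. -/
theorem Tlem {ι : Type} [DecidableEq ι] (T : Finset ι) (φ : B → N)
    (hφ : ∀ l : List B, l.length = T.card → ∀ y, iterDiff l φ y = 0)
    (a b : ι → B) (x : B) :
    ∑ S ∈ T.powerset, (-1 : ℤ) ^ (T.card - S.card) •
      φ (x + ∑ i ∈ S, a i + ∑ i ∈ T \ S, b i) = 0 := by
  classical
  induction T using Finset.induction_on generalizing φ x with
  | empty => simpa using hφ [] rfl x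
  | insert _ _ hj =>
    rename_i j T ih
    rw [Finset.powerset_insert, Finset.sum_union]
    · have h2 : ∑ S ∈ T.powerset.image (insert j),
          (-1 : ℤ) ^ ((insert j T).card - S.card) •
            φ (x + ∑ i ∈ S, a i + ∑ i ∈ insert j T \ S, b i)
          = ∑ S ∈ T.powerset, (-1 : ℤ) ^ (T.card - S.card) •
            (fun y => φ (y + a j)) (x + ∑ i ∈ S, a i + ∑ i ∈ T \ S, b i) := by
        rw [Finset.sum_image]
        · apply Finset.sum_congr rfl
          intro S hS
          have hST : S ⊆ T := Finset.mem_powerset.mp hS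
          have hjS : j ∉ S := fun h => hj (hST h)
          have hc1 : (insert j T).card - (insert j S).card = T.card - S.card := by
            rw [Finset.card_insert_of_notMem hj, Finset.card_insert_of_notMem hjS]
            omega
          have hd : insert j T \ insert j S = T \ S := by
            ext i
            simp only [Finset.mem_sdiff, Finset.mem_insert, not_or]
            constructor
            · rintro ⟨h1 | h1, h2, h3⟩
              · exact absurd h1 h2
              · exact ⟨h1, h3⟩
            · rintro ⟨h1, h2⟩
              exact ⟨Or.inr h1, fun he => hj (he ▸ h1), h2⟩
          rw [hc1, hd, Finset.sum_insert hjS]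
          have harg : x + (a j + ∑ i ∈ S, a i) + ∑ i ∈ T \ S, b i
              = x + ∑ i ∈ S, a i + ∑ i ∈ T \ S, b i + a j := by
            abel_nf
          rw [harg]
        · intro S hS S' hS' h
          have hST : S ⊆ T := Finset.mem_powerset.mp hS
          have hST' : S' ⊆ T := Finset.mem_powerset.mp hS'
          apply Finset.Subset.antisymm
          · intro y hy
            have : y ∈ insert j S' := h ▸ Finset.mem_insert_of_mem hy
            rcases Finset.mem_insert.mp this with rfl | h'
            · exact absurd hy (fun hy => hj (hST hy))
            · exact h'
          · intro y hy
            have : y ∈ insert j S := h ▸ Finset.mem_insert_of_mem hy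
            rcases Finset.mem_insert.mp this with rfl | h'
            · exact absurd hy (fun hy => hj (hST' hy))
            · exact h'
      have h1 : ∑ S ∈ T.powerset,
          (-1 : ℤ) ^ ((insert j T).card - S.card) •
            φ (x + ∑ i ∈ S, a i + ∑ i ∈ insert j T \ S, b i)
          = - ∑ S ∈ T.powerset, (-1 : ℤ) ^ (T.card - S.card) •
            (fun y => φ (y + b j)) (x + ∑ i ∈ S, a i + ∑ i ∈ T \ S, b i) := by
        rw [← Finset.sum_neg_distrib]
        apply Finset.sum_congr rfl
        intro S hS
        have hST : S ⊆ T := Finset.mem_powerset.mp hS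
        have hjS : j ∉ S := fun h => hj (hST h)
        have hc : S.card ≤ T.card := Finset.card_le_card hST
        have hc1 : (insert j T).card - S.card = (T.card - S.card) + 1 := by
          rw [Finset.card_insert_of_notMem hj]; omega
        have hd : insert j T \ S = insert j (T \ S) := by
          ext i
          simp only [Finset.mem_sdiff, Finset.mem_insert]
          constructor
          · rintro ⟨h1 | h1, h2⟩
            · exact Or.inl h1
            · exact Or.inr ⟨h1, h2⟩
          · rintro (rfl | ⟨h1, h2⟩)
            · exact ⟨Or.inl rfl, fun hS' => hj (hST hS')⟩
            · exact ⟨Or.inr h1, h2⟩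
        have hjTS : j ∉ T \ S := fun h => hj (Finset.mem_sdiff.mp h).1
        rw [hc1, hd, Finset.sum_insert hjTS, pow_succ]
        have harg : x + ∑ i ∈ S, a i + (b j + ∑ i ∈ T \ S, b i)
            = x + ∑ i ∈ S, a i + ∑ i ∈ T \ S, b i + b j := by
          abel_nf
        rw [harg]
        simp [neg_smul]
      rw [h1, h2]
      have hsum : ∑ S ∈ T.powerset, (-1 : ℤ) ^ (T.card - S.card) •
            (fun y => φ (y + a j)) (x + ∑ i ∈ S, a i + ∑ i ∈ T \ S, b i)
          - ∑ S ∈ T.powerset, (-1 : ℤ) ^ (T.card - S.card) •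
            (fun y => φ (y + b j)) (x + ∑ i ∈ S, a i + ∑ i ∈ T \ S, b i)
          = ∑ S ∈ T.powerset, (-1 : ℤ) ^ (T.card - S.card) •
            (fun y => φ (y + a j) - φ (y + b j)) (x + ∑ i ∈ S, a i + ∑ i ∈ T \ S, b i) := by
        rw [← Finset.sum_sub_distrib]
        apply Finset.sum_congr rfl
        intro S _
        simp [smul_sub]
      rw [neg_add_eq_sub, hsum]
      refine ih (fun y => φ (y + a j) - φ (y + b j)) ?_ x
      intro l hl y
      have hsplit : (fun y => φ (y + a j) - φ (y + b j))
          = fun y => finDiff (a j) φ y - finDiff (b j) φ y := by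
        funext y; simp [finDiff]
      have e1 : iterDiff l (finDiff (a j) φ) = iterDiff (l ++ [a j]) φ := by
        rw [iterDiff_append]; rfl
      have e2 : iterDiff l (finDiff (b j) φ) = iterDiff (l ++ [b j]) φ := by
        rw [iterDiff_append]; rfl
      rw [hsplit, iterDiff_sub]
      show iterDiff l (finDiff (a j) φ) y - iterDiff l (finDiff (b j) φ) y = 0
      rw [e1, e2, hφ _ (by simp [hl, Finset.card_insert_of_notMem hj]) y,
        hφ _ (by simp [hl, Finset.card_insert_of_notMem hj]) y, sub_zero]
    · rw [Finset.disjoint_right]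
      intro S hS hS'
      have := Finset.mem_powerset.mp hS'
      obtain ⟨S', hS'', rfl⟩ := Finset.mem_image.mp hS
      exact hj (this (Finset.mem_insert_self j S'))

theorem barPsi_poly {f : B → N} {n : ℕ} (hf : PolyDegLE f n)
    (hBadd : ∀ a b : B, κB (a + b) = κB a + κB b)
    (hBgen : ∀ z : M, ∃ a b : B, z = κB a - κB b)
    (hBker : ∀ a b : B, κB a = κB b ↔ ∃ c : B, a + c = b + c) :
    PolyDegLE (barPsi κB hBgen f n) n := by
  classical
  intro L hL ζ
  rw [iterDiff_eq_FD]
  set ι := Fin L.length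
  let a' : ι → B := fun i => Classical.choose (hBgen (L.get i))
  let b' : ι → B := fun i => Classical.choose (Classical.choose_spec (hBgen (L.get i)))
  have hab : ∀ i : ι, L.get i = κB (a' i) - κB (b' i) :=
    fun i => Classical.choose_spec (Classical.choose_spec (hBgen (L.get i)))
  let a₀ : B := Classical.choose (hBgen ζ)
  let b₀ : B := Classical.choose (Classical.choose_spec (hBgen ζ))
  have hab₀ : ζ = κB a₀ - κB b₀ :=
    Classical.choose_spec (Classical.choose_spec (hBgen ζ))
  set c : B := b₀ + ∑ i ∈ (Finset.univ : Finset ι), b' i with hc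
  have κB_sum : ∀ (s : Finset ι) (g : ι → B), κB (∑ i ∈ s, g i) = ∑ i ∈ s, κB (g i) := by
    intro s g
    induction s using Finset.induction_on with
    | empty => simp [kappa_zero hBadd]
    | insert _ _ hj => rename_i j s ih; rw [Finset.sum_insert hj, Finset.sum_insert hj, hBadd, ih]
  have hrep : ∀ S ∈ (Finset.univ : Finset ι).powerset,
      barPsi κB hBgen f n (ζ + ∑ i ∈ S, L.get i)
        = Gr f n (a₀ + ∑ i ∈ S, a' i + ∑ i ∈ Finset.univ \ S, b' i) c := by
    intro S hS
    apply barPsi_eq hf hBadd hBgen hBker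
    rw [hBadd, hBadd, κB_sum, κB_sum, hc, hBadd, κB_sum]
    have hsplit : ∑ i ∈ (Finset.univ : Finset ι), κB (b' i)
        = ∑ i ∈ S, κB (b' i) + ∑ i ∈ Finset.univ \ S, κB (b' i) := by
      rw [add_comm, Finset.sum_sdiff (Finset.mem_powerset.mp hS)]
    rw [hsplit, hab₀]
    rw [show ∑ i ∈ S, L.get i = ∑ i ∈ S, (κB (a' i) - κB (b' i)) from
      Finset.sum_congr rfl (fun i _ => hab i), Finset.sum_sub_distrib]
    abel
  rw [FD, Finset.sum_congr rfl (fun S hS => by rw [hrep S hS])]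
  apply Tlem (Finset.univ : Finset ι) (fun w => Gr f n w c)
  intro l hl y
  have hcard : (Finset.univ : Finset ι).card = n + 1 := by
    simp [ι, hL]
  rw [hcard] at hl
  show iterDiff l (fun w => Gr f n w c) y = 0
  have : (fun w => Gr f n w c) = fun w => ∑ i ∈ Finset.range (n + 1),
      (-1 : ℤ) ^ i • iterDiff (List.replicate i c) f w := rfl
  rw [this, iterDiff_finsetSum]
  apply Finset.sum_eq_zero
  intro i _
  rw [iterDiff_zsmul, iterDiff_replicate_vanish hf c i l hl]
  simp

end Extension

end PolyAux

namespace PolyAux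

section Composition

variable {A M N : Type} [AddCommMonoid A] [AddCommGroup M] [AddCommGroup N]

open AddMonoidAlgebra

/-- linear extension of `h : M → N` to the monoid algebra `ℤ[M]`. -/
noncomputable def Hhat (h : M → N) : AddMonoidAlgebra ℤ M →+ N :=
  (Finsupp.liftAddHom (fun z => zmultiplesHom N (h z))).comp
    AddMonoidAlgebra.coeffAddEquiv.toAddMonoidHom

theorem Hhat_single (h : M → N) (z : M) (c : ℤ) :
    Hhat h (AddMonoidAlgebra.single z c) = c • h z := by
  exact Finsupp.liftAddHom_apply_single (fun z => zmultiplesHom N (h z)) z c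

theorem singleSum {ι : Type} (s : Finset ι) (g : ι → M) :
    AddMonoidAlgebra.single (∑ i ∈ s, g i) (1 : ℤ) =
      ∏ i ∈ s, AddMonoidAlgebra.single (g i) (1 : ℤ) := by
  classical
  induction s using Finset.induction_on with
  | empty => simp [AddMonoidAlgebra.one_def]
  | insert _ _ hj =>
    rename_i j s ih
    rw [Finset.sum_insert hj, Finset.prod_insert hj, ← ih,
      AddMonoidAlgebra.single_mul_single, one_mul]

theorem Hhat_single_prod {ι : Type} [DecidableEq ι] (h : M → N) (𝒰 : Finset ι)
    (z : ι → M) (y : M) :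
    Hhat h (AddMonoidAlgebra.single y (1 : ℤ) *
      ∏ U ∈ 𝒰, (AddMonoidAlgebra.single (z U) (1 : ℤ) - 1)) = FD 𝒰 z h y := by
  classical
  induction 𝒰 using Finset.induction_on generalizing y with
  | empty => simp [Hhat_single]
  | insert _ _ hj =>
    rename_i j 𝒰 ih
    rw [Finset.prod_insert hj, FD_insert hj]
    have expand : AddMonoidAlgebra.single y (1 : ℤ) *
        ((AddMonoidAlgebra.single (z j) (1 : ℤ) - 1) *
          ∏ U ∈ 𝒰, (AddMonoidAlgebra.single (z U) (1 : ℤ) - 1))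
        = AddMonoidAlgebra.single (y + z j) (1 : ℤ) *
            ∏ U ∈ 𝒰, (AddMonoidAlgebra.single (z U) (1 : ℤ) - 1)
          - AddMonoidAlgebra.single y (1 : ℤ) *
            ∏ U ∈ 𝒰, (AddMonoidAlgebra.single (z U) (1 : ℤ) - 1) := by
      have e1 : AddMonoidAlgebra.single y (1:ℤ) * (AddMonoidAlgebra.single (z j) (1:ℤ) - 1)
          = AddMonoidAlgebra.single (y + z j) (1:ℤ) - AddMonoidAlgebra.single y (1:ℤ) := by
        rw [mul_sub, mul_one, AddMonoidAlgebra.single_mul_single, one_mul]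
      rw [← mul_assoc, e1, sub_mul]
    rw [expand, map_sub, ih, ih]

/-- Möbius inversion for the difference expansion. -/
theorem moebius {ι : Type} [DecidableEq ι] (S : Finset ι) (a : ι → A) (f : A → M) (x : A) :
    ∑ U ∈ S.powerset, FD U a f x = f (x + ∑ i ∈ S, a i) := by
  classical
  induction S using Finset.induction_on generalizing x with
  | empty => simp
  | insert _ _ hj =>
    rename_i j S ih
    rw [Finset.powerset_insert, Finset.sum_union]
    · have h2 : ∑ U ∈ S.powerset.image (insert j), FD U a f x
          = ∑ U ∈ S.powerset, (FD U a f (x + a j) - FD U a f x) := by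
        rw [Finset.sum_image]
        · apply Finset.sum_congr rfl
          intro U hU
          exact FD_insert (fun h => hj (Finset.mem_powerset.mp hU h)) a f x
        · intro U hU U' hU' h
          have hjU : j ∉ U := fun hyy => hj (Finset.mem_powerset.mp hU hyy)
          have hjU' : j ∉ U' := fun hyy => hj (Finset.mem_powerset.mp hU' hyy)
          have := congrArg (fun W => W.erase j) h
          simpa [Finset.erase_insert hjU, Finset.erase_insert hjU'] using this
      rw [h2, Finset.sum_sub_distrib, ih]
      rw [ih]
      have : x + a j + ∑ i ∈ S, a i = x + ∑ i ∈ insert j S, a i := by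
        rw [Finset.sum_insert hj]
        rw [add_assoc]
      rw [this]
      abel
    · rw [Finset.disjoint_right]
      intro U hU hU'
      have := Finset.mem_powerset.mp hU'
      obtain ⟨U', hU'', rfl⟩ := Finset.mem_image.mp hU
      exact hj (this (Finset.mem_insert_self j U'))

/-- the alternating interval sum. -/
theorem alt_sum {ι : Type} [DecidableEq ι] (T : Finset ι) (A' : Finset ι) (hA : A' ⊆ T) :
    ∑ S ∈ T.powerset.filter (fun S => A' ⊆ S), (-1 : ℤ) ^ (T.card - S.card)
      = if A' = T then 1 else 0 := by
  classical
  have hbij : ∑ S ∈ T.powerset.filter (fun S => A' ⊆ S), (-1 : ℤ) ^ (T.card - S.card)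
      = ∑ V ∈ (T \ A').powerset, (-1 : ℤ) ^ ((T \ A').card - V.card) := by
    apply Finset.sum_nbij' (fun S => S \ A') (fun V => A' ∪ V)
    · intro S hS
      rw [Finset.mem_filter, Finset.mem_powerset] at hS
      rw [Finset.mem_powerset]
      exact Finset.sdiff_subset_sdiff hS.1 (le_refl _)
    · intro V hV
      rw [Finset.mem_powerset] at hV
      rw [Finset.mem_filter, Finset.mem_powerset]
      constructor
      · exact Finset.union_subset hA (hV.trans Finset.sdiff_subset)
      · exact Finset.subset_union_left
    · intro S hS
      rw [Finset.mem_filter] at hS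
      exact Finset.union_sdiff_of_subset hS.2
    · intro V hV
      rw [Finset.mem_powerset] at hV
      have : Disjoint A' V := Finset.disjoint_of_subset_right hV Finset.disjoint_sdiff
      rw [Finset.union_sdiff_cancel_left this]
    · intro S hS
      rw [Finset.mem_filter, Finset.mem_powerset] at hS
      congr 1
      have h1 : (S \ A').card = S.card - A'.card := Finset.card_sdiff_of_subset hS.2
      have h2 : (T \ A').card = T.card - A'.card := Finset.card_sdiff_of_subset hA
      have h3 : A'.card ≤ S.card := Finset.card_le_card hS.2
      have h4 : S.card ≤ T.card := Finset.card_le_card hS.1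
      omega
  rw [hbij]
  have hfact : ∀ V ∈ (T \ A').powerset, (-1 : ℤ) ^ ((T \ A').card - V.card)
      = (-1 : ℤ) ^ (T \ A').card * (-1 : ℤ) ^ V.card := by
    intro V hV
    have hle : V.card ≤ (T \ A').card := Finset.card_le_card (Finset.mem_powerset.mp hV)
    have : (T \ A').card - V.card + V.card = (T \ A').card := by omega
    calc (-1 : ℤ) ^ ((T \ A').card - V.card)
        = (-1 : ℤ) ^ ((T \ A').card - V.card) * ((-1 : ℤ) ^ V.card * (-1 : ℤ) ^ V.card) := by
          rw [← pow_add]; simp [← two_mul]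
      _ = (-1 : ℤ) ^ (T \ A').card * (-1 : ℤ) ^ V.card := by
          rw [← mul_assoc, ← pow_add, this]
  rw [Finset.sum_congr rfl hfact, ← Finset.mul_sum, Finset.sum_powerset_neg_one_pow_card]
  by_cases hAT : A' = T
  · subst hAT; simp
  · have hne : T \ A' ≠ ∅ := by
      intro h
      exact hAT (Finset.Subset.antisymm hA (fun i hi => by
        by_contra hia
        exact absurd (Finset.mem_sdiff.mpr ⟨hi, hia⟩) (h ▸ Finset.notMem_empty i)))
    rw [if_neg hne, if_neg hAT, mul_zero]

theorem key_identity {ι : Type} [DecidableEq ι] (T : Finset ι) (a : ι → A) (f : A → M)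
    (x : A) :
    ∑ S ∈ T.powerset, (-1 : ℤ) ^ (T.card - S.card) •
        AddMonoidAlgebra.single (f (x + ∑ i ∈ S, a i)) (1 : ℤ)
      = ∑ 𝒰 ∈ (T.powerset.erase ∅).powerset.filter (fun 𝒰 => 𝒰.biUnion id = T),
          AddMonoidAlgebra.single (f x) (1 : ℤ) *
            ∏ U ∈ 𝒰, (AddMonoidAlgebra.single (FD U a f x) (1 : ℤ) - 1) := by
  classical
  set e : Finset ι → AddMonoidAlgebra ℤ M :=
    fun U => AddMonoidAlgebra.single (FD U a f x) (1 : ℤ) - 1 with he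
  -- step (b): expand each summand
  have hb : ∀ S ∈ T.powerset,
      AddMonoidAlgebra.single (f (x + ∑ i ∈ S, a i)) (1 : ℤ)
        = ∑ 𝒰 ∈ (S.powerset.erase ∅).powerset,
            AddMonoidAlgebra.single (f x) (1 : ℤ) * ∏ U ∈ 𝒰, e U := by
    intro S _
    have hmoe : f (x + ∑ i ∈ S, a i) = f x + ∑ U ∈ S.powerset.erase ∅, FD U a f x := by
      rw [← moebius S a f x, ← Finset.add_sum_erase _ _ (Finset.empty_mem_powerset S)]
      congr 1
      simp [FD]
    rw [hmoe]
    have hsplit : AddMonoidAlgebra.single (f x + ∑ U ∈ S.powerset.erase ∅, FD U a f x) (1:ℤ)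
        = AddMonoidAlgebra.single (f x) (1:ℤ) *
          AddMonoidAlgebra.single (∑ U ∈ S.powerset.erase ∅, FD U a f x) (1:ℤ) := by
      rw [AddMonoidAlgebra.single_mul_single, one_mul]
    rw [hsplit, singleSum]
    have hfac : ∀ U ∈ S.powerset.erase ∅,
        AddMonoidAlgebra.single (FD U a f x) (1:ℤ) = e U + 1 := by
      intro U _
      rw [he]; ring
    rw [Finset.prod_congr rfl hfac, Finset.prod_add]
    rw [Finset.mul_sum]
    apply Finset.sum_congr rfl
    intro 𝒰 _
    rw [Finset.prod_const_one, mul_one]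
  rw [Finset.sum_congr rfl (fun S hS => by rw [hb S hS])]
  -- push the scalar inside and swap summation order
  have hswap : ∑ S ∈ T.powerset, (-1:ℤ)^(T.card - S.card) •
        ∑ 𝒰 ∈ (S.powerset.erase ∅).powerset,
          AddMonoidAlgebra.single (f x) (1 : ℤ) * ∏ U ∈ 𝒰, e U
      = ∑ 𝒰 ∈ (T.powerset.erase ∅).powerset,
          ∑ S ∈ T.powerset.filter (fun S => 𝒰 ⊆ S.powerset.erase ∅),
            (-1:ℤ)^(T.card - S.card) •
              (AddMonoidAlgebra.single (f x) (1 : ℤ) * ∏ U ∈ 𝒰, e U) := by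
    rw [Finset.sum_congr rfl (fun S _ => Finset.smul_sum)]
    apply Finset.sum_comm'
    intro S 𝒰
    simp only [Finset.mem_filter, Finset.mem_powerset]
    constructor
    · rintro ⟨hST, hUS⟩
      refine ⟨⟨hST, hUS⟩, fun U hU => ?_⟩
      have := hUS hU
      rw [Finset.mem_erase, Finset.mem_powerset] at this ⊢
      exact ⟨this.1, this.2.trans hST⟩
    · rintro ⟨⟨hST, hUS⟩, _⟩
      exact ⟨hST, hUS⟩
  rw [hswap, Finset.sum_filter]
  -- evaluate inner alternating sums
  apply Finset.sum_congr rfl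
  intro 𝒰 h𝒰
  rw [Finset.mem_powerset] at h𝒰
  have hU_sub : ∀ U ∈ 𝒰, U ⊆ T ∧ U ≠ ∅ := by
    intro U hU
    have := h𝒰 hU
    rw [Finset.mem_erase, Finset.mem_powerset] at this
    exact ⟨this.2, this.1⟩
  have hAsub : 𝒰.biUnion id ⊆ T := by
    apply Finset.biUnion_subset.mpr
    exact fun U hU => (hU_sub U hU).1
  have hfilter : T.powerset.filter (fun S => 𝒰 ⊆ S.powerset.erase ∅)
      = T.powerset.filter (fun S => 𝒰.biUnion id ⊆ S) := by
    apply Finset.filter_congr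
    intro S hS
    rw [Finset.mem_powerset] at hS
    constructor
    · intro hsub
      apply Finset.biUnion_subset.mpr
      intro U hU
      have := hsub hU
      rw [Finset.mem_erase, Finset.mem_powerset] at this
      exact this.2
    · intro hsub
      intro U hU
      rw [Finset.mem_erase, Finset.mem_powerset]
      refine ⟨(hU_sub U hU).2, ?_⟩
      exact (Finset.subset_biUnion_of_mem id hU).trans hsub
  rw [← Finset.sum_smul, hfilter, alt_sum T (𝒰.biUnion id) hAsub]
  by_cases hcov : 𝒰.biUnion id = T
  · rw [if_pos hcov, if_pos hcov, one_smul]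
  · rw [if_neg hcov, if_neg hcov, zero_smul]

theorem comp_poly (f : A → M) (h : M → N) (m n : ℕ)
    (hf : PolyDegLE f m) (hh : PolyDegLE h n) :
    PolyDegLE (fun x => h (f x)) (m * n) := by
  classical
  intro l hl x
  rw [iterDiff_eq_FD]
  set ι := Fin l.length
  set T : Finset ι := Finset.univ with hT
  have hcard : T.card = m * n + 1 := by simp [hT, ι, hl]
  have hFD : FD T l.get (fun x => h (f x)) x
      = Hhat h (∑ S ∈ T.powerset, (-1 : ℤ) ^ (T.card - S.card) •
          AddMonoidAlgebra.single (f (x + ∑ i ∈ S, l.get i)) (1 : ℤ)) := by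
    rw [map_sum, FD]
    apply Finset.sum_congr rfl
    intro S _
    rw [map_zsmul, Hhat_single, one_smul]
  rw [hFD, key_identity, map_sum]
  apply Finset.sum_eq_zero
  intro 𝒰 h𝒰
  rw [Finset.mem_filter, Finset.mem_powerset] at h𝒰
  obtain ⟨h𝒰sub, h𝒰cov⟩ := h𝒰
  by_cases hbig : ∃ U ∈ 𝒰, m + 1 ≤ U.card
  · obtain ⟨U, hU, hUc⟩ := hbig
    have hδ : FD U l.get f x = 0 := FD_vanish hf hUc _ x
    have hfac : (AddMonoidAlgebra.single (FD U l.get f x) (1:ℤ) - 1) = 0 := by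
      rw [hδ, AddMonoidAlgebra.one_def, sub_self]
    rw [Finset.prod_eq_zero hU hfac, mul_zero, map_zero]
  · push_neg at hbig
    rw [Hhat_single_prod]
    apply FD_vanish hh _ _ (f x)
    have hle : T.card ≤ ∑ U ∈ 𝒰, U.card := by
      calc T.card = (𝒰.biUnion id).card := by rw [h𝒰cov]
        _ ≤ ∑ U ∈ 𝒰, (id U).card := Finset.card_biUnion_le
        _ = ∑ U ∈ 𝒰, U.card := rfl
    have hle2 : ∑ U ∈ 𝒰, U.card ≤ 𝒰.card * m := by
      calc ∑ U ∈ 𝒰, U.card ≤ ∑ _U ∈ 𝒰, m := Finset.sum_le_sum (fun U hU => Nat.lt_succ_iff.mp (hbig U hU))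
        _ = 𝒰.card * m := by rw [Finset.sum_const, smul_eq_mul]
    by_contra hcon
    push_neg at hcon
    have h3 : 𝒰.card ≤ n := by omega
    have h4 : 𝒰.card * m ≤ n * m := Nat.mul_le_mul_right m h3
    rw [Nat.mul_comm n m] at h4
    omega

end Composition

end PolyAux

/-- If `φ : A → B` and `ψ : B → C` are polynomial maps of commutative monoids of
degrees (at most) `m` and `n` respectively — polynomiality being measured after
composing with the group-completion maps `κ_B : B → K₀(B)` and
`κ_C : C → K₀(C)` — then `ψ ∘ φ` is polynomial of degree at most `m * n`. -/
theorem polynomial_composition_degree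
    (A : Type) [AddCommMonoid A] (B : Type) [AddCommMonoid B] (C : Type) [AddCommMonoid C]
    (M : Type) [AddCommGroup M] (κB : B → M)
    (hBadd : ∀ a b : B, κB (a + b) = κB a + κB b)
    (hBgen : ∀ z : M, ∃ a b : B, z = κB a - κB b)
    (hBker : ∀ a b : B, κB a = κB b ↔ ∃ c : B, a + c = b + c)
    (N : Type) [AddCommGroup N] (κC : C → N)
    (hCadd : ∀ a b : C, κC (a + b) = κC a + κC b)
    (hCgen : ∀ z : N, ∃ a b : C, z = κC a - κC b)
    (hCker : ∀ a b : C, κC a = κC b ↔ ∃ c : C, a + c = b + c)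
    (φ : A → B) (ψ : B → C) (m n : ℕ)
    (hφ : PolyDegLE (fun x => κB (φ x)) m)
    (hψ : PolyDegLE (fun y => κC (ψ y)) n) :
    PolyDegLE (fun x => κC (ψ (φ x))) (m * n) := by
  classical
  have hh : PolyDegLE (PolyAux.barPsi κB hBgen (fun y => κC (ψ y)) n) n :=
    PolyAux.barPsi_poly hψ hBadd hBgen hBker
  have hcomp := PolyAux.comp_poly (fun x => κB (φ x))
      (PolyAux.barPsi κB hBgen (fun y => κC (ψ y)) n) m n hφ hh
  have heq : (fun x => PolyAux.barPsi κB hBgen (fun y => κC (ψ y)) n (κB (φ x)))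
      = fun x => κC (ψ (φ x)) := by
    funext x
    exact PolyAux.barPsi_kappa hψ hBadd hBgen hBker (φ x)
  rw [← heq]
  exact hcomp
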